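/- Let B be a unital C*-algebra with the following two properties: (1) there is a constant V > 0 such that every b ∈ B is a finite linear combination b = Σ λ_j p_j of projections p_j ∈ B with Σ |λ_j| ≤ V‖b‖; (2) the set of positive combinations of projections is norm-dense in the positive cone B₊. Then every positive invertible element of B is a finite positive combination of projections. -/

import Mathlib

/-- `a` is a (finite) positive combination of projections in `B`. -/
def IsPCP {B : Type*} [Ring B] [StarRing B] [SMul ℝ B] (a : B) : Prop :=
  ∃ (n : ℕ) (lam : Fin n → ℝ) (p : Fin n → B),
    (∀ j, 0 < lam j) ∧ (∀ j, IsIdempotentElem (p j) ∧ IsSelfAdjoint (p j)) ∧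
    a = ∑ j, lam j • p j

section Aux

variable {B : Type*} [Ring B] [StarRing B] [Module ℝ B]

lemma isPCP_add {x y : B} (hx : IsPCP x) (hy : IsPCP y) : IsPCP (x + y) := by
  obtain ⟨n, lam, p, hl, hp, rfl⟩ := hx
  obtain ⟨m, mu, q, hm, hq, rfl⟩ := hy
  refine ⟨n + m, Fin.append lam mu, Fin.append p q, ?_, ?_, ?_⟩
  · intro j
    refine Fin.addCases (fun i => ?_) (fun i => ?_) j
    · simpa [Fin.append_left] using hl i
    · simpa [Fin.append_right] using hm i
  · intro j
    refine Fin.addCases (fun i => ?_) (fun i => ?_) j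
    · simpa [Fin.append_left] using hp i
    · simpa [Fin.append_right] using hq i
  · rw [Fin.sum_univ_add]
    simp [Fin.append_left, Fin.append_right]

lemma isPCP_smul_one {c : ℝ} (hc : 0 < c) : IsPCP (c • (1 : B)) := by
  refine ⟨1, fun _ => c, fun _ => 1, fun _ => hc, fun _ => ⟨by simp [IsIdempotentElem],
    (IsSelfAdjoint.one B)⟩, by simp⟩

lemma isPCP_smul_proj_add {μ c : ℝ} {p : B} (hp : IsIdempotentElem p)
    (hpsa : IsSelfAdjoint p) (h : |μ| < c) : IsPCP (μ • p + c • (1 : B)) := by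
  rcases lt_trichotomy μ 0 with hμ | hμ | hμ
  · refine ⟨2, ![-μ, c + μ], ![1 - p, 1], ?_, ?_, ?_⟩
    · intro j
      have h' := (abs_lt.mp h).1
      fin_cases j <;> simp <;> linarith
    · intro j
      fin_cases j
      · exact ⟨hp.one_sub, ((IsSelfAdjoint.one B)).sub hpsa⟩
      · exact ⟨by simp [IsIdempotentElem], (IsSelfAdjoint.one B)⟩
    · simp only [Fin.sum_univ_two, Matrix.cons_val_zero, Matrix.cons_val_one, Matrix.head_cons]
      module
  · subst hμ
    simpa using isPCP_smul_one (by simpa using h)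
  · refine ⟨2, ![μ, c], ![p, 1], ?_, ?_, ?_⟩
    · intro j
      fin_cases j
      · simpa using hμ
      · simpa using (abs_nonneg μ).trans_lt h
    · intro j
      fin_cases j
      · exact ⟨hp, hpsa⟩
      · exact ⟨by simp [IsIdempotentElem], (IsSelfAdjoint.one B)⟩
    · simp [Fin.sum_univ_two]

lemma isPCP_add_sum : ∀ {n : ℕ} (x : B) (f : Fin n → B), IsPCP x → (∀ j, IsPCP (f j)) →
    IsPCP (x + ∑ j, f j)
  | 0, x, _, hx, _ => by simpa using hx
  | n + 1, x, f, hx, hf => by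
    rw [Fin.sum_univ_succ, ← add_assoc]
    exact isPCP_add_sum _ _ (isPCP_add hx (hf 0)) fun j => hf j.succ

end Aux

/-- Fong–Murphy-type criterion: in a unital C*-algebra in which (1) every element is a
linear combination of projections with control `∑ |λ_j| ≤ V‖b‖` on the coefficients, and
(2) positive combinations of projections are norm-dense in the positive cone, every
positive invertible element is a positive combination of projections. -/
theorem pos_invertible_isPCP {B : Type*} [CStarAlgebra B] [PartialOrder B]
    [StarOrderedRing B] (V : ℝ) (hV : 0 < V)
    (hspan : ∀ b : B, ∃ (n : ℕ) (lam : Fin n → ℂ) (p : Fin n → B),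
      (∀ j, IsIdempotentElem (p j) ∧ IsSelfAdjoint (p j)) ∧
      b = ∑ j, lam j • p j ∧ ∑ j, ‖lam j‖ ≤ V * ‖b‖)
    (hdense : ∀ b : B, 0 ≤ b → ∀ ε > (0 : ℝ), ∃ t : B, IsPCP t ∧ ‖b - t‖ < ε) :
    ∀ a : B, 0 ≤ a → IsUnit a → IsPCP a := by
  intro a ha hu
  rcases subsingleton_or_nontrivial B with hB | hB
  · exact ⟨0, ![], ![], fun j => j.elim0, fun j => j.elim0, Subsingleton.elim _ _⟩
  have hsa : IsSelfAdjoint a := .of_nonneg ha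
  -- obtain a positive spectral lower bound for `a`
  obtain ⟨δ, hδ, hδa⟩ : ∃ r > 0, algebraMap ℝ B r ≤ a := by
    rw [CFC.exists_pos_algebraMap_le_iff hsa]
    intro x hx
    refine lt_of_le_of_ne (spectrum_nonneg_of_nonneg ha hx) fun h0 => ?_
    exact spectrum.zero_notMem ℝ hu (h0 ▸ hx)
  set b : B := a - (δ / 2) • 1 with hbdef
  have hhalf : (0:ℝ) < δ / 2 := by positivity
  have hb : 0 ≤ b := by
    have h1 : (0 : B) ≤ a - δ • 1 := by
      rwa [sub_nonneg, ← Algebra.algebraMap_eq_smul_one]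
    have h2 : (0 : B) ≤ (δ / 2) • 1 := by
      have : ((δ / 2).sqrt • (1 : B)) = star ((δ / 2).sqrt • (1 : B)) := by
        simp [star_smul]
      calc (0 : B) ≤ star ((δ / 2).sqrt • (1 : B)) * ((δ / 2).sqrt • (1 : B)) :=
            star_mul_self_nonneg _
        _ = (δ / 2) • 1 := by
            rw [← this, smul_mul_smul_comm, one_mul, Real.mul_self_sqrt hhalf.le]
    calc (0 : B) ≤ (a - δ • 1) + (δ / 2) • 1 := add_nonneg h1 h2
      _ = b := by rw [hbdef]; module
  set ε : ℝ := δ / (2 * V) with hεdef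
  have hε : 0 < ε := by positivity
  obtain ⟨t, htp, htn⟩ := hdense b hb ε hε
  set r : B := b - t with hrdef
  -- `t` is selfadjoint
  have htsa : IsSelfAdjoint t := by
    obtain ⟨m, lm, q, hlm, hq, hteq⟩ := htp
    rw [IsSelfAdjoint, hteq, star_sum]
    exact Finset.sum_congr rfl fun j _ => by rw [star_smul, (hq j).2.star_eq, star_trivial]
  have hbsa : IsSelfAdjoint b := by
    have h1 : IsSelfAdjoint ((δ / 2) • (1 : B)) := by
      rw [IsSelfAdjoint, star_smul, star_trivial, star_one]
    exact hsa.sub h1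
  have hrsa : IsSelfAdjoint r := hbsa.sub htsa
  obtain ⟨n, lam, p, hproj, hrep, hbound⟩ := hspan r
  set μ : Fin n → ℝ := fun j => (lam j).re with hμdef
  -- `r` is a real combination of the projections
  have hr2 : r = ∑ j, μ j • p j := by
    have hst : star r = ∑ j, (starRingEnd ℂ) (lam j) • p j := by
      rw [hrep, star_sum]
      exact Finset.sum_congr rfl fun j _ => by
        rw [star_smul, (hproj j).2.star_eq, Complex.star_def]
    have h2r : r + r = ∑ j, (lam j + (starRingEnd ℂ) (lam j)) • p j := by
      nth_rewrite 2 [← hrsa.star_eq]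
      rw [hst, hrep, ← Finset.sum_add_distrib]
      exact Finset.sum_congr rfl fun j _ => (add_smul _ _ _).symm
    have : (2 : ℂ)⁻¹ • (r + r) = r := by
      rw [← two_smul ℂ r, smul_smul, inv_mul_cancel₀ (two_ne_zero), one_smul]
    rw [← this, h2r, Finset.smul_sum]
    refine Finset.sum_congr rfl fun j _ => ?_
    rw [smul_smul, Complex.add_conj, ← Complex.coe_smul]
    congr 1
    push_cast
    ring
  -- coefficient bound
  set S : ℝ := ∑ j, |μ j| with hSdef
  have hSb : S < δ / 2 := by
    have h1 : S ≤ ∑ j, ‖lam j‖ :=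
      Finset.sum_le_sum fun j _ => Complex.abs_re_le_norm (lam j)
    have h2 : V * ‖r‖ < V * ε := by
      exact mul_lt_mul_of_pos_left htn hV
    have h3 : V * ε = δ / 2 := by
      rw [hεdef]; field_simp
    linarith
  set η : ℝ := (δ / 2 - S) / (n + 1) with hηdef
  have hη : 0 < η := by
    apply div_pos (by linarith) (by positivity)
  set c : Fin n → ℝ := fun j => |μ j| + η with hcdef
  have hsumc : ∑ j, c j = S + n * η := by
    rw [hcdef, Finset.sum_add_distrib, ← hSdef, Finset.sum_const]
    simp [nsmul_eq_mul]
  have h2 : η + ∑ j, c j = δ / 2 := by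
    rw [hsumc, hηdef]
    field_simp
    ring
  have key : a = (t + η • 1) + ∑ j, (μ j • p j + c j • (1 : B)) := by
    have h1 : ∑ j, (μ j • p j + c j • (1 : B)) = r + (∑ j, c j) • 1 := by
      rw [Finset.sum_add_distrib, ← hr2, ← Finset.sum_smul]
    rw [h1]
    have ha' : a = b + (δ / 2) • 1 := by rw [hbdef]; module
    have hb' : b = t + r := by rw [hrdef]; module
    rw [ha', hb', ← h2]
    module
  rw [key]
  refine isPCP_add_sum _ _ (isPCP_add htp (isPCP_smul_one hη)) fun j => ?_
  exact isPCP_smul_proj_add (hproj j).1 (hproj j).2 (by rw [hcdef]; simp [hη])
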